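/- If W_KᵀUᵀU W_K is positive definite, then as σ → 0 the guided mean ν(σ) converges to W_K⁻¹-pullback of the query: ν(σ) → (W_KᵀUᵀUW_K)⁻¹ W_KᵀUᵀU W_Q ψ₀. -/

import Mathlib

open Matrix Filter

lemma aux_posSemidef_smul {d : ℕ} {M : Matrix (Fin d) (Fin d) ℝ} (hM : M.PosSemidef)
    {s : ℝ} (hs : 0 ≤ s) : (s • M).PosSemidef := by
  refine posSemidef_iff_dotProduct_mulVec.mpr ⟨?_, fun x => ?_⟩
  · simp only [Matrix.IsHermitian, conjTranspose_smul, star_trivial]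
    rw [hM.1.eq]
  rw [smul_mulVec, dotProduct_smul]
  exact smul_nonneg hs ((posSemidef_iff_dotProduct_mulVec.mp hM).2 x)

lemma aux_posDef_add {d : ℕ} {M N : Matrix (Fin d) (Fin d) ℝ} (hM : M.PosSemidef)
    (hN : N.PosDef) : (M + N).PosDef := by
  refine posDef_iff_dotProduct_mulVec.mpr ⟨hM.1.add hN.1, fun x hx => ?_⟩
  rw [add_mulVec, dotProduct_add]
  exact add_pos_of_nonneg_of_pos ((posSemidef_iff_dotProduct_mulVec.mp hM).2 x) ((posDef_iff_dotProduct_mulVec.mp hN).2 hx)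

/-- If W_KᵀUᵀUW_K is positive definite, as σ → 0⁺ the guided mean converges to
(W_KᵀUᵀUW_K)⁻¹W_KᵀUᵀUW_Qψ₀. -/
theorem guided_mean_small_sigma (d : ℕ) (ST : Matrix (Fin d) (Fin d) ℝ) (hST : ST.PosDef)
    (μK ψ₀ : Fin d → ℝ) (U WK WQ : Matrix (Fin d) (Fin d) ℝ)
    (hK : (WKᵀ * Uᵀ * U * WK).PosDef) :
    Tendsto
      (fun σ : ℝ =>
        ((ST⁻¹ + (σ ^ 2)⁻¹ • (WKᵀ * Uᵀ * U * WK))⁻¹).mulVec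
          (ST⁻¹.mulVec μK + (σ ^ 2)⁻¹ • (WKᵀ * Uᵀ * U * WQ).mulVec ψ₀))
      (nhdsWithin 0 (Set.Ioi 0))
      (nhds ((WKᵀ * Uᵀ * U * WK)⁻¹.mulVec ((WKᵀ * Uᵀ * U * WQ).mulVec ψ₀))) := by
  set K : Matrix (Fin d) (Fin d) ℝ := WKᵀ * Uᵀ * U * WK with hKdef
  set a : Fin d → ℝ := ST⁻¹.mulVec μK
  set b : Fin d → ℝ := (WKᵀ * Uᵀ * U * WQ).mulVec ψ₀
  have hSTinv : (ST⁻¹).PosDef := hST.inv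
  have hMσ : ∀ σ : ℝ, 0 < σ → ((σ ^ 2) • ST⁻¹ + K).PosDef := fun σ hσ =>
    aux_posDef_add (aux_posSemidef_smul hSTinv.posSemidef (sq_nonneg σ)) hK
  -- the reformulated function
  have hg : Tendsto (fun σ : ℝ => (((σ ^ 2) • ST⁻¹ + K)⁻¹).mulVec ((σ ^ 2) • a + b))
      (nhdsWithin 0 (Set.Ioi 0)) (nhds (K⁻¹.mulVec b)) := by
    have hcont : ContinuousAt
        (fun σ : ℝ => (((σ ^ 2) • ST⁻¹ + K)⁻¹).mulVec ((σ ^ 2) • a + b)) 0 := by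
      have h1 : Continuous fun σ : ℝ => (σ ^ 2) • ST⁻¹ + K := by continuity
      have hdet : IsUnit ((((0:ℝ) ^ 2) • ST⁻¹ + K).det) := by
        have h0 : ((0:ℝ) ^ 2) = 0 := by norm_num
        rw [h0, zero_smul, zero_add]
        exact (isUnit_iff_ne_zero).mpr hK.det_pos.ne'
      have h2 : ContinuousAt (fun σ : ℝ => ((σ ^ 2) • ST⁻¹ + K)⁻¹) 0 := by
        refine (continuousAt_matrix_inv _ ?_).comp h1.continuousAt
        obtain ⟨u, hu⟩ := hdet
        exact hu ▸ NormedRing.inverse_continuousAt u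
      have h3 : ContinuousAt (fun σ : ℝ => (σ ^ 2) • a + b) 0 := by fun_prop
      exact (Continuous.matrix_mulVec continuous_fst continuous_snd).continuousAt.comp
        (h2.prodMk h3)
    have := hcont.continuousWithinAt (s := Set.Ioi 0)
    simpa using this.tendsto
  refine hg.congr' ?_
  filter_upwards [self_mem_nhdsWithin] with σ hσ
  have hσ0 : (0:ℝ) < σ := hσ
  have hs : (0:ℝ) < σ ^ 2 := by positivity
  have hsne : (σ ^ 2 : ℝ) ≠ 0 := hs.ne'
  have hMdet : IsUnit (((σ ^ 2) • ST⁻¹ + K).det) :=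
    isUnit_iff_ne_zero.mpr (hMσ σ hσ0).det_pos.ne'
  have hfactor : ST⁻¹ + (σ ^ 2)⁻¹ • K = ((σ ^ 2)⁻¹ : ℝ) • ((σ ^ 2) • ST⁻¹ + K) := by
    rw [smul_add, smul_smul, inv_mul_cancel₀ hsne, one_smul]
  have hinv : (ST⁻¹ + (σ ^ 2)⁻¹ • K)⁻¹ = (σ ^ 2) • ((σ ^ 2) • ST⁻¹ + K)⁻¹ := by
    rw [hfactor]
    have := Matrix.inv_smul' (A := (σ ^ 2) • ST⁻¹ + K) ((Units.mk0 (σ ^ 2) hsne)⁻¹) hMdet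
    simpa [Units.smul_def] using this
  have harg : ((σ ^ 2) • a + b) = (σ ^ 2) • (a + (σ ^ 2)⁻¹ • b) := by
    rw [smul_add, smul_smul, mul_inv_cancel₀ hsne, one_smul]
  rw [hinv, smul_mulVec, harg, Matrix.mulVec_smul]
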